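/- Let P̄ ∈ ℝ^{k×k}, R ∈ ℝ^{d×d} be positive definite, H ∈ ℝ^{d×k}, x̄ ∈ ℝ^k, z ∈ ℝ^d, and h̄ ∈ ℝ^d (playing the role of h(x̄) in a nonlinear measurement model). Let H̃ be the rowwise concatenation of H and I_k, let z̃ = (z + H x̄ − h̄, x̄), and let R̃ = blockdiag(R, P̄). Then (H̃ᵀ R̃^{-1} H̃)^{-1} H̃ᵀ R̃^{-1} z̃ = x̄ + K (z − h̄), where K = P̄ Hᵀ (H P̄ Hᵀ + R)^{-1}. -/

import Mathlib

open Matrix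

theorem stmt4 {k d : ℕ} (P : Matrix (Fin k) (Fin k) ℝ) (R : Matrix (Fin d) (Fin d) ℝ)
    (hP : P.PosDef) (hR : R.PosDef) (H : Matrix (Fin d) (Fin k) ℝ)
    (xbar : Fin k → ℝ) (z hbar : Fin d → ℝ)
    (Htil : Matrix (Fin d ⊕ Fin k) (Fin k) ℝ) (hHtil : Htil = fromRows H 1)
    (ztil : Fin d ⊕ Fin k → ℝ) (hztil : ztil = Sum.elim (z + H *ᵥ xbar - hbar) xbar)
    (Rtil : Matrix (Fin d ⊕ Fin k) (Fin d ⊕ Fin k) ℝ)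
    (hRtil : Rtil = fromBlocks R 0 0 P)
    (K : Matrix (Fin k) (Fin d) ℝ) (hK : K = P * Hᵀ * (H * P * Hᵀ + R)⁻¹) :
    ((Htilᵀ * Rtil⁻¹ * Htil)⁻¹ * Htilᵀ * Rtil⁻¹) *ᵥ ztil
      = xbar + K *ᵥ (z - hbar) := by
  subst hHtil hztil hRtil hK
  set S := H * P * Hᵀ + R with hS
  set A := Hᵀ * R⁻¹ * H + P⁻¹ with hA
  have hSpd : S.PosDef := by
    refine Matrix.PosDef.posSemidef_add ?_ hR
    simpa [Matrix.conjTranspose_eq_transpose_of_trivial] using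
      hP.posSemidef.mul_mul_conjTranspose_same H
  have hApd : A.PosDef := by
    refine Matrix.PosDef.posSemidef_add ?_ hP.inv
    simpa [Matrix.conjTranspose_eq_transpose_of_trivial] using
      hR.posSemidef.inv.conjTranspose_mul_mul_same H
  have hAinv : A⁻¹ * A = 1 :=
    Matrix.nonsing_inv_mul A ((Matrix.isUnit_iff_isUnit_det A).1 hApd.isUnit)
  have hSinv : S * S⁻¹ = 1 :=
    Matrix.mul_nonsing_inv S ((Matrix.isUnit_iff_isUnit_det S).1 hSpd.isUnit)
  have hRinv : R⁻¹ * R = 1 :=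
    Matrix.nonsing_inv_mul R ((Matrix.isUnit_iff_isUnit_det R).1 hR.isUnit)
  have hPinv : P⁻¹ * P = 1 :=
    Matrix.nonsing_inv_mul P ((Matrix.isUnit_iff_isUnit_det P).1 hP.isUnit)
  have hRtilInv : (fromBlocks R 0 0 P)⁻¹ = fromBlocks R⁻¹ 0 0 P⁻¹ := by
    rw [Matrix.inv_fromBlocks_zero₂₁_of_isUnit_iff _ _ _ (by simp [hR.isUnit, hP.isUnit])]
    simp
  have h1 : (fromRows H (1 : Matrix (Fin k) (Fin k) ℝ))ᵀ * (fromBlocks R 0 0 P)⁻¹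
      = fromCols (Hᵀ * R⁻¹) P⁻¹ := by
    rw [hRtilInv, Matrix.transpose_fromRows, Matrix.fromCols_mul_fromBlocks]
    simp
  have h2 : (fromRows H (1 : Matrix (Fin k) (Fin k) ℝ))ᵀ * (fromBlocks R 0 0 P)⁻¹
      * fromRows H (1 : Matrix (Fin k) (Fin k) ℝ) = A := by
    rw [h1, Matrix.fromCols_mul_fromRows, hA]
    simp [Matrix.mul_one]
  have hkey : Hᵀ * R⁻¹ * S = A * (P * Hᵀ) := by
    rw [hS, hA, Matrix.mul_add, Matrix.add_mul]
    rw [show Hᵀ * R⁻¹ * R = Hᵀ by rw [Matrix.mul_assoc, hRinv, Matrix.mul_one]]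
    rw [show P⁻¹ * (P * Hᵀ) = Hᵀ by rw [← Matrix.mul_assoc, hPinv, Matrix.one_mul]]
    simp [Matrix.mul_assoc]
  have hKeq : A⁻¹ * (Hᵀ * R⁻¹) = P * Hᵀ * S⁻¹ := by
    have : Hᵀ * R⁻¹ = A * (P * Hᵀ * S⁻¹) := by
      rw [← Matrix.mul_assoc, ← hkey, Matrix.mul_assoc, hSinv, Matrix.mul_one]
    rw [this, ← Matrix.mul_assoc, hAinv, Matrix.one_mul]
  have hv : z + H *ᵥ xbar - hbar = (z - hbar) + H *ᵥ xbar := by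
    ext i; simp; ring
  rw [h2, Matrix.mul_assoc, h1, ← Matrix.mulVec_mulVec,
    Matrix.fromCols_mulVec_sumElim, hv]
  have expand : (Hᵀ * R⁻¹) *ᵥ ((z - hbar) + H *ᵥ xbar) + P⁻¹ *ᵥ xbar
      = (Hᵀ * R⁻¹) *ᵥ (z - hbar) + A *ᵥ xbar := by
    rw [Matrix.mulVec_add, hA, Matrix.add_mulVec, Matrix.mulVec_mulVec]
    abel
  rw [expand, Matrix.mulVec_add, Matrix.mulVec_mulVec, Matrix.mulVec_mulVec, hKeq, hAinv,
    Matrix.one_mulVec, add_comm]
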